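/- For the 1→2 optimal cloning channel output ρ = (1/3)(I₃ + ∑_i n_i J_i^{(3)}) on the symmetric two-qubit subspace, the reduced single-qubit state of either clone equals (2/3)|φ⟩⟨φ| + (1/3)(I₂/2), and hence the fidelity ⟨φ|ρ_clone|φ⟩ of each clone with the pure input qubit |φ⟩ (with unit Bloch vector n) equals 5/6. -/

import Mathlib

open Matrix

/-- Isometric identification of `ℂ³` with the symmetric subspace of `ℂ² ⊗ ℂ²`:
`|0⟩ ↦ |00⟩`, `|1⟩ ↦ (|01⟩ + |10⟩)/√2`, `|2⟩ ↦ |11⟩`. -/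
noncomputable def symEmbed : Matrix (Fin 2 × Fin 2) (Fin 3) ℂ :=
  Matrix.of fun p k =>
    if k = 0 then (if p = (0, 0) then 1 else 0)
    else if k = 1 then (if p = (0, 1) ∨ p = (1, 0) then ((1 / Real.sqrt 2 : ℝ) : ℂ) else 0)
    else (if p = (1, 1) then 1 else 0)

/-- Spin-1 representation matrices of `su(2)`. -/
noncomputable def J1x : Matrix (Fin 3) (Fin 3) ℂ :=
  ((Real.sqrt 2 : ℂ))⁻¹ • !![0, 1, 0; 1, 0, 1; 0, 1, 0]

noncomputable def J1y : Matrix (Fin 3) (Fin 3) ℂ :=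
  ((Real.sqrt 2 : ℂ))⁻¹ •
    !![0, -Complex.I, 0; Complex.I, 0, -Complex.I; 0, Complex.I, 0]

noncomputable def J1z : Matrix (Fin 3) (Fin 3) ℂ := !![1, 0, 0; 0, 0, 0; 0, 0, -1]


lemma symEmbed_ptrace (M : Matrix (Fin 3) (Fin 3) ℂ) :
    (Matrix.of fun i j => ∑ k, (symEmbed * M * symEmbedᴴ) (i, k) (j, k)) =
      !![M 0 0 + M 1 1 / 2, (M 0 1 + M 1 2) * ((Real.sqrt 2 : ℂ))⁻¹;
         (M 1 0 + M 2 1) * ((Real.sqrt 2 : ℂ))⁻¹, M 1 1 / 2 + M 2 2] := by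
  have hs : (Real.sqrt 2 : ℂ) * (Real.sqrt 2 : ℂ) = 2 := by
    norm_cast
    rw [Real.mul_self_sqrt (by norm_num : (0:ℝ) ≤ 2)]
  have h2 : (Real.sqrt 2 : ℂ) ≠ 0 := by
    intro h; rw [h] at hs; simp at hs
  have hc : ((1 / Real.sqrt 2 : ℝ) : ℂ) = ((Real.sqrt 2 : ℂ))⁻¹ := by
    push_cast; rw [one_div]
  have hhalf : ((Real.sqrt 2 : ℂ))⁻¹ * ((Real.sqrt 2 : ℂ))⁻¹ = 1 / 2 := by
    field_simp
    linear_combination -hs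
  ext i j
  fin_cases i <;> fin_cases j <;>
    · simp only [Matrix.of_apply, Matrix.mul_apply, Fin.sum_univ_three, Fin.sum_univ_two,
        symEmbed, Matrix.conjTranspose_apply, Matrix.of_apply, hc]
      norm_num [Prod.ext_iff, Fin.ext_iff]
      first
        | ring1
        | linear_combination M 1 1 * hhalf

/-- For the `1→2` optimal cloning channel output `ρ = (1/3)(I₃ + ∑ n_i J_i)` on the
symmetric two-qubit subspace (with `n` the Bloch vector of the pure input qubit `φ`),
the reduced state of either clone equals `(2/3)|φ⟩⟨φ| + (1/3)(I₂/2)`, hence each clone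
has fidelity `⟨φ|ρ_clone|φ⟩ = 5/6` with the input. -/
theorem cloning_fidelity_five_sixths (φ : Fin 2 → ℂ)
    (hφ : ‖φ 0‖ ^ 2 + ‖φ 1‖ ^ 2 = 1) :
    let nx : ℂ := star (φ 0) * φ 1 + φ 0 * star (φ 1)
    let ny : ℂ := Complex.I * (-(star (φ 0)) * φ 1 + φ 0 * star (φ 1))
    let nz : ℂ := ((‖φ 0‖ ^ 2 : ℝ) : ℂ) - ((‖φ 1‖ ^ 2 : ℝ) : ℂ)
    let ρ : Matrix (Fin 3) (Fin 3) ℂ :=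
      ((1 : ℂ) / 3) • ((1 : Matrix (Fin 3) (Fin 3) ℂ) + nx • J1x + ny • J1y + nz • J1z)
    let ρ2 : Matrix (Fin 2 × Fin 2) (Fin 2 × Fin 2) ℂ := symEmbed * ρ * symEmbedᴴ
    let ρclone : Matrix (Fin 2) (Fin 2) ℂ := Matrix.of fun i j => ∑ k, ρ2 (i, k) (j, k)
    ρclone = ((2 : ℂ) / 3) • Matrix.of (fun i j => φ i * star (φ j)) +
        ((1 : ℂ) / 6) • (1 : Matrix (Fin 2) (Fin 2) ℂ) ∧
      ∑ i, ∑ j, star (φ i) * ρclone i j * φ j = 5 / 6 := by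
  intro nx ny nz ρ ρ2 ρclone
  have hs : (Real.sqrt 2 : ℂ) * (Real.sqrt 2 : ℂ) = 2 := by
    norm_cast
    rw [Real.mul_self_sqrt (by norm_num : (0:ℝ) ≤ 2)]
  have h2 : (Real.sqrt 2 : ℂ) ≠ 0 := by
    intro h
    rw [h] at hs; simp at hs
  have ha : ((‖φ 0‖ ^ 2 : ℝ) : ℂ) = φ 0 * star (φ 0) := by
    rw [Complex.sq_norm]
    exact (Complex.mul_conj (φ 0)).symm
  have hb : ((‖φ 1‖ ^ 2 : ℝ) : ℂ) = φ 1 * star (φ 1) := by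
    rw [Complex.sq_norm]
    exact (Complex.mul_conj (φ 1)).symm
  have hab : φ 0 * star (φ 0) + φ 1 * star (φ 1) = 1 := by
    rw [← ha, ← hb]; exact_mod_cast hφ
  simp only [Complex.star_def] at hab
  have hhalf : ((Real.sqrt 2 : ℂ))⁻¹ * ((Real.sqrt 2 : ℂ))⁻¹ = 1 / 2 := by
    field_simp
    linear_combination -hs
  have hmain : ρclone = ((2 : ℂ) / 3) • Matrix.of (fun i j => φ i * star (φ j)) +
      ((1 : ℂ) / 6) • (1 : Matrix (Fin 2) (Fin 2) ℂ) := by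
    have := symEmbed_ptrace ρ
    show (Matrix.of fun i j => ∑ k, (symEmbed * ρ * symEmbedᴴ) (i, k) (j, k)) = _
    rw [this]
    have hρ : ∀ a b : Fin 3, ρ a b = ((1 : ℂ) / 3) *
        ((1 : Matrix (Fin 3) (Fin 3) ℂ) a b + nx * J1x a b + ny * J1y a b + nz * J1z a b) := by
      intro a b
      simp only [ρ, Matrix.add_apply, Matrix.smul_apply, smul_eq_mul]
      try ring
    ext i j
    fin_cases i <;> fin_cases j <;>
      · simp only [hρ, J1x, J1y, J1z, nx, ny, nz, ha, hb, Matrix.one_apply,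
          Matrix.smul_apply, Matrix.add_apply, Matrix.of_apply, smul_eq_mul,
          Matrix.cons_val', Matrix.cons_val_zero, Matrix.cons_val_one, Matrix.head_cons,
          Matrix.empty_val', Matrix.cons_val_fin_one, Matrix.head_fin_const]
        norm_num [show (1:Fin 3) ≠ 2 by decide, show (2:Fin 3) ≠ 1 by decide,
          Matrix.vecHead, Matrix.vecTail, Matrix.cons_val, Matrix.cons_val_two]
        first
          | linear_combination (norm := ring1) (-(1:ℂ)/3) * hab
          | linear_combination (norm := ring1)
              ((4:ℂ)/3 * φ 0 * (starRingEnd ℂ) (φ 1)) * hhalf +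
              (-(2:ℂ)/3 * ((Real.sqrt 2:ℂ))⁻¹ * ((Real.sqrt 2:ℂ))⁻¹ *
                (-((starRingEnd ℂ) (φ 0)) * φ 1 + φ 0 * (starRingEnd ℂ) (φ 1))) * Complex.I_mul_I
          | linear_combination (norm := ring1)
              ((4:ℂ)/3 * (starRingEnd ℂ) (φ 0) * φ 1) * hhalf +
              ((2:ℂ)/3 * ((Real.sqrt 2:ℂ))⁻¹ * ((Real.sqrt 2:ℂ))⁻¹ *
                (-((starRingEnd ℂ) (φ 0)) * φ 1 + φ 0 * (starRingEnd ℂ) (φ 1))) * Complex.I_mul_I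
  refine ⟨hmain, ?_⟩
  rw [hmain]
  simp only [Matrix.add_apply, Matrix.smul_apply, Matrix.of_apply, Matrix.one_apply,
    Fin.sum_univ_succ, Fin.sum_univ_zero, smul_eq_mul]
  norm_num
  try simp only [Complex.star_def]
  linear_combination ((5:ℂ)/6 + (2:ℂ)/3 * ((starRingEnd ℂ) (φ 0) * φ 0 + (starRingEnd ℂ) (φ 1) * φ 1)) * hab
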